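/- The minimum over all pairs (u, v) ∈ ℤ[i]² with (u, v) ≠ (0, 0) of the quantity |u·conj(u) − i·v·conj(v)|² equals 1; that is, the nonassociative Alamouti-type 2×2 code obtained from Cay(ℚ(i), i) by restricting entries to ℤ[i] has minimum determinant 1 and hence satisfies the non-vanishing determinant property. -/

import Mathlib

open Complex

theorem cay_alamouti_min_det :
    IsLeast {y : ℝ | ∃ u v : GaussianInt, (u, v) ≠ (0, 0) ∧
      y = ‖
        (GaussianInt.toComplex u * (starRingEnd ℂ) (GaussianInt.toComplex u) -
          I * (GaussianInt.toComplex v * (starRingEnd ℂ) (GaussianInt.toComplex v)))‖ ^ 2}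
      1 := by
  constructor
  · refine ⟨1, 0, by simp, ?_⟩
    simp
  · rintro y ⟨u, v, huv, rfl⟩
    have key : ∀ x : GaussianInt, GaussianInt.toComplex x * (starRingEnd ℂ) (GaussianInt.toComplex x)
        = ((x.norm : ℝ) : ℂ) := by
      intro x
      rw [Complex.mul_conj, GaussianInt.intCast_real_norm]
    rw [key u, key v]
    set a : ℝ := (u.norm : ℝ)
    set b : ℝ := (v.norm : ℝ)
    have habs : ‖((a : ℂ) - I * (b : ℂ))‖ ^ 2 = a ^ 2 + b ^ 2 := by
      rw [Complex.sq_norm, Complex.normSq_apply]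
      simp [a, b]
      ring
    rw [habs]
    have ha : 0 ≤ u.norm := GaussianInt.norm_nonneg u
    have hb : 0 ≤ v.norm := GaussianInt.norm_nonneg v
    have h1 : 1 ≤ u.norm ∨ 1 ≤ v.norm := by
      rcases eq_or_ne u 0 with hu | hu
      · right
        have hv : v ≠ 0 := by
          intro hv; exact huv (by simp [hu, hv])
        have : v.norm ≠ 0 := by
          simpa [Zsqrtd.norm_eq_zero_iff] using hv
        omega
      · left
        have : u.norm ≠ 0 := by
          simpa [Zsqrtd.norm_eq_zero_iff] using hu
        omega
    rcases h1 with h | h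
    · have : (1 : ℝ) ≤ a := by unfold a; exact_mod_cast h
      nlinarith [sq_nonneg b]
    · have : (1 : ℝ) ≤ b := by unfold b; exact_mod_cast h
      nlinarith [sq_nonneg a]
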